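/- If a local function f with no field-independent part (f[x,0] = 0) has vanishing Euler-Lagrange derivatives δf/δφ^i = 0 for all i, then f is a total divergence: f = ∂_μ j^μ for some local functions j^μ; explicitly, one may take j^μ = ∫_0^1 (dλ/λ) k̃^μ[x, λφ] where k̃^μ arises from integrating by parts the identity φ^i_{(ν)} ∂f/∂φ^i_{(ν)} = φ^i δf/δφ^i + ∂_μ k̃^μ. -/

import Mathlib

open MvPolynomial

abbrev JetVar (ι : Type) (n : ℕ) : Type := (ι × Multiset (Fin n)) ⊕ Fin n

abbrev LocalFn (ι : Type) (n : ℕ) : Type := MvPolynomial (JetVar ι n) ℝ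

variable {ι : Type} {n : ℕ} [DecidableEq ι]

noncomputable def tD (ν : Fin n) (f : LocalFn ι n) : LocalFn ι n :=
  pderiv (Sum.inr ν) f +
    ∑ v ∈ f.vars,
      (match v with
      | Sum.inl (i, μ) => X (Sum.inl (i, ν ::ₘ μ)) * pderiv (Sum.inl (i, μ)) f
      | Sum.inr _ => 0 : LocalFn ι n)

noncomputable def tDm (μ : Multiset (Fin n)) (f : LocalFn ι n) : LocalFn ι n :=
  (μ.sort (· ≤ ·)).foldr tD f

noncomputable def EL (i : ι) (f : LocalFn ι n) : LocalFn ι n :=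
  ∑ v ∈ f.vars,
    (match v with
    | Sum.inl (j, μ) =>
        if j = i then ((-1 : ℝ) ^ Multiset.card μ) • tDm μ (pderiv (Sum.inl (j, μ)) f)
        else 0
    | Sum.inr _ => 0 : LocalFn ι n)

noncomputable def evQ (Q : ι → LocalFn ι n) (f : LocalFn ι n) : LocalFn ι n :=
  ∑ v ∈ f.vars,
    (match v with
    | Sum.inl (i, μ) => tDm μ (Q i) * pderiv (Sum.inl (i, μ)) f
    | Sum.inr _ => 0 : LocalFn ι n)

/-- evaluation at the zero section: all jet variables φ^i_{(μ)} are set to 0,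
the x-variables are kept. -/
noncomputable def zeroSection {ι : Type} {n : ℕ} (f : LocalFn ι n) : LocalFn ι n :=
  aeval (fun v : JetVar ι n =>
    match v with
    | Sum.inl _ => 0
    | Sum.inr ν => X (Sum.inr ν)) f

section Aux
variable {ι : Type} {n : ℕ} [DecidableEq ι]

lemma tD_eq_sum (ν : Fin n) (f : LocalFn ι n) {s : Finset (JetVar ι n)} (hs : f.vars ⊆ s) :
    tD ν f = pderiv (Sum.inr ν) f +
      ∑ v ∈ s,
        (match v with
        | Sum.inl (i, μ) => X (Sum.inl (i, ν ::ₘ μ)) * pderiv (Sum.inl (i, μ)) f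
        | Sum.inr _ => 0 : LocalFn ι n) := by
  unfold tD
  congr 1
  refine Finset.sum_subset hs fun v hv hnv => ?_
  rcases v with ⟨i, μ⟩ | ρ
  · simp [pderiv_eq_zero_of_notMem_vars hnv]
  · rfl

lemma tD_add (ν : Fin n) (a b : LocalFn ι n) : tD ν (a + b) = tD ν a + tD ν b := by
  rw [tD_eq_sum ν (a + b) (vars_add_subset a b),
    tD_eq_sum ν a Finset.subset_union_left,
    tD_eq_sum ν b Finset.subset_union_right, map_add]
  have : ∀ v ∈ a.vars ∪ b.vars,
      (match v with
      | Sum.inl (i, μ) => X (Sum.inl (i, ν ::ₘ μ)) * pderiv (Sum.inl (i, μ)) (a + b)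
      | Sum.inr _ => 0 : LocalFn ι n) =
      (match v with
      | Sum.inl (i, μ) => X (Sum.inl (i, ν ::ₘ μ)) * pderiv (Sum.inl (i, μ)) a
      | Sum.inr _ => 0 : LocalFn ι n) +
      (match v with
      | Sum.inl (i, μ) => X (Sum.inl (i, ν ::ₘ μ)) * pderiv (Sum.inl (i, μ)) b
      | Sum.inr _ => 0 : LocalFn ι n) := by
    intro v _
    rcases v with ⟨i, μ⟩ | ρ
    · simp [mul_add]
    · simp
  rw [Finset.sum_congr rfl this, Finset.sum_add_distrib]
  ring

lemma tD_smul (ν : Fin n) (c : ℝ) (a : LocalFn ι n) : tD ν (c • a) = c • tD ν a := by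
  have hv : (c • a).vars ⊆ a.vars := by
    rw [smul_eq_C_mul]
    exact (vars_mul _ _).trans (by simp [vars_C])
  rw [tD_eq_sum ν (c • a) hv, tD_eq_sum ν a (subset_refl _), Derivation.map_smul, smul_add]
  congr 1
  rw [Finset.smul_sum]
  refine Finset.sum_congr rfl fun v _ => ?_
  rcases v with ⟨i, μ⟩ | ρ
  · simp only [Derivation.map_smul, mul_smul_comm]
  · simp

lemma tD_zero (ν : Fin n) : tD ν (0 : LocalFn ι n) = 0 := by
  have := tD_smul ν 0 (0 : LocalFn ι n)
  simpa using this

lemma tD_C (ν : Fin n) (c : ℝ) : tD ν (C c : LocalFn ι n) = 0 := by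
  rw [tD_eq_sum ν _ (by simp [vars_C] : (C c : LocalFn ι n).vars ⊆ ∅)]
  simp [pderiv_C]

lemma tD_one (ν : Fin n) : tD ν (1 : LocalFn ι n) = 0 := by
  simpa using tD_C ν 1

lemma tD_mul (ν : Fin n) (a b : LocalFn ι n) : tD ν (a * b) = tD ν a * b + a * tD ν b := by
  rw [tD_eq_sum ν (a * b) (vars_mul a b),
    tD_eq_sum ν a Finset.subset_union_left,
    tD_eq_sum ν b Finset.subset_union_right]
  have : ∀ v ∈ a.vars ∪ b.vars,
      (match v with
      | Sum.inl (i, μ) => X (Sum.inl (i, ν ::ₘ μ)) * pderiv (Sum.inl (i, μ)) (a * b)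
      | Sum.inr _ => 0 : LocalFn ι n) =
      (match v with
      | Sum.inl (i, μ) => X (Sum.inl (i, ν ::ₘ μ)) * pderiv (Sum.inl (i, μ)) a
      | Sum.inr _ => 0 : LocalFn ι n) * b +
      a * (match v with
      | Sum.inl (i, μ) => X (Sum.inl (i, ν ::ₘ μ)) * pderiv (Sum.inl (i, μ)) b
      | Sum.inr _ => 0 : LocalFn ι n) := by
    intro v _
    rcases v with ⟨i, μ⟩ | ρ
    · simp only [pderiv_mul]
      ring
    · simp
  rw [Finset.sum_congr rfl this, Finset.sum_add_distrib, pderiv_mul]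
  simp only [add_mul, mul_add, Finset.sum_mul, Finset.mul_sum]
  ring

lemma tD_X_inl (ν : Fin n) (i : ι) (μ : Multiset (Fin n)) :
    tD ν (X (Sum.inl (i, μ)) : LocalFn ι n) = X (Sum.inl (i, ν ::ₘ μ)) := by
  rw [tD_eq_sum ν _ (by rw [vars_X] : (X (Sum.inl (i, μ)) : LocalFn ι n).vars ⊆ {Sum.inl (i, μ)})]
  rw [Finset.sum_singleton]
  rw [pderiv_X_of_ne (by simp)]
  show 0 + X (Sum.inl (i, ν ::ₘ μ)) * pderiv (Sum.inl (i, μ)) (X (Sum.inl (i, μ))) = _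
  rw [pderiv_X_self, mul_one, zero_add]

lemma tD_X_inr (ν ρ : Fin n) : ∃ c : ℝ, tD ν (X (Sum.inr ρ) : LocalFn ι n) = C c := by
  rw [tD_eq_sum ν _ (by rw [vars_X] : (X (Sum.inr ρ) : LocalFn ι n).vars ⊆ {Sum.inr ρ})]
  rw [Finset.sum_singleton]
  rcases eq_or_ne ν ρ with h | h
  · subst h
    exact ⟨1, by simp [pderiv_X_self]⟩
  · refine ⟨0, ?_⟩
    rw [pderiv_X_of_ne (by simpa using h.symm)]
    simp



lemma tD_swap_X (ν ρ : Fin n) (v : JetVar ι n) :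
    tD ν (tD ρ (X v : LocalFn ι n)) = tD ρ (tD ν (X v)) := by
  rcases v with ⟨i, μ⟩ | τ
  · rw [tD_X_inl, tD_X_inl, tD_X_inl, tD_X_inl, Multiset.cons_swap]
  · obtain ⟨c1, hc1⟩ := tD_X_inr (ι := ι) ρ τ
    obtain ⟨c2, hc2⟩ := tD_X_inr (ι := ι) ν τ
    rw [hc1, hc2, tD_C, tD_C]

lemma tD_comm (ν ρ : Fin n) (f : LocalFn ι n) : tD ν (tD ρ f) = tD ρ (tD ν f) := by
  induction f using MvPolynomial.induction_on with
  | C c => rw [tD_C, tD_C, tD_zero, tD_zero]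
  | add p q hp hq => simp only [tD_add, hp, hq]
  | mul_X p v hp =>
    rw [tD_mul, tD_add, tD_mul, tD_mul, tD_mul, tD_add, tD_mul, tD_mul, hp, tD_swap_X]
    ring

lemma foldr_tD_perm {l₁ l₂ : List (Fin n)} (h : l₁.Perm l₂) (f : LocalFn ι n) :
    l₁.foldr tD f = l₂.foldr tD f :=
  h.foldr_eq' (fun x _ y _ z => tD_comm y x z) f

lemma tDm_zero_m (f : LocalFn ι n) : tDm 0 f = f := by
  unfold tDm
  rw [Multiset.sort_zero]
  rfl

lemma tDm_cons (ν : Fin n) (μ : Multiset (Fin n)) (f : LocalFn ι n) :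
    tDm (ν ::ₘ μ) f = tD ν (tDm μ f) := by
  unfold tDm
  have hp : ((ν ::ₘ μ).sort (· ≤ ·)).Perm (ν :: μ.sort (· ≤ ·)) := by
    rw [← Multiset.coe_eq_coe]
    rw [Multiset.sort_eq, ← Multiset.cons_coe, Multiset.sort_eq]
  rw [foldr_tD_perm hp]
  rfl

lemma tD_tDm (ν : Fin n) (μ : Multiset (Fin n)) (f : LocalFn ι n) :
    tD ν (tDm μ f) = tDm μ (tD ν f) := by
  unfold tDm
  generalize μ.sort (· ≤ ·) = l
  induction l generalizing f with
  | nil => rfl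
  | cons a l ih => simp only [List.foldr_cons, tD_comm ν a, ih]

lemma tDm_X (i : ι) (μ κ : Multiset (Fin n)) :
    tDm μ (X (Sum.inl (i, κ)) : LocalFn ι n) = X (Sum.inl (i, μ + κ)) := by
  unfold tDm
  suffices h : ∀ l : List (Fin n),
      l.foldr tD (X (Sum.inl (i, κ)) : LocalFn ι n) = X (Sum.inl (i, (l : Multiset (Fin n)) + κ)) by
    rw [h, Multiset.sort_eq]
  intro l
  induction l with
  | nil => simp
  | cons a l ih =>
    simp only [List.foldr_cons, ih, tD_X_inl]
    rw [← Multiset.cons_coe, Multiset.cons_add]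

lemma tD_sub (ν : Fin n) (a b : LocalFn ι n) : tD ν (a - b) = tD ν a - tD ν b := by
  rw [sub_eq_add_neg, ← neg_one_smul ℝ b, tD_add, tD_smul, neg_one_smul, ← sub_eq_add_neg]

lemma tD_sum {α : Type*} (ν : Fin n) (s : Finset α) (h : α → LocalFn ι n) :
    tD ν (∑ x ∈ s, h x) = ∑ x ∈ s, tD ν (h x) := by
  classical
  induction s using Finset.induction with
  | empty => simp [tD_zero]
  | insert _ _ hx ih => rw [Finset.sum_insert hx, Finset.sum_insert hx, tD_add, ih]

lemma ibp (μ : Multiset (Fin n)) (a b : LocalFn ι n) :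
    ∃ k : Fin n → LocalFn ι n,
      tDm μ a * b = ((-1 : ℝ) ^ Multiset.card μ) • (a * tDm μ b) + ∑ ν : Fin n, tD ν (k ν) := by
  induction μ using Multiset.induction generalizing b with
  | empty =>
    exact ⟨0, by simp [tDm_zero_m, tD_zero]⟩
  | cons ν₀ μ ih =>
    obtain ⟨k, hk⟩ := ih (tD ν₀ b)
    refine ⟨fun ν => (if ν = ν₀ then tDm μ a * b else 0) - k ν, ?_⟩
    have h4 : ∑ ν : Fin n, tD ν ((if ν = ν₀ then tDm μ a * b else 0) - k ν)
        = tD ν₀ (tDm μ a * b) - ∑ ν : Fin n, tD ν (k ν) := by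
      have : ∀ ν : Fin n, tD ν ((if ν = ν₀ then tDm μ a * b else 0) - k ν)
          = (if ν = ν₀ then tD ν (tDm μ a * b) else 0) - tD ν (k ν) := by
        intro ν
        rw [tD_sub]
        congr 1
        split
        · rfl
        · exact tD_zero ν
      simp only [this, Finset.sum_sub_distrib]
      congr 1
      rw [Finset.sum_ite_eq' Finset.univ ν₀ (fun ν => tD ν (tDm μ a * b))]
      simp
    have hmul := tD_mul ν₀ (tDm μ a) b
    have hcons : tDm (ν₀ ::ₘ μ) a = tD ν₀ (tDm μ a) := tDm_cons ν₀ μ a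
    have hconsb : tDm (ν₀ ::ₘ μ) b = tDm μ (tD ν₀ b) := by rw [tDm_cons, tD_tDm]
    rw [h4, hcons, hconsb, Multiset.card_cons, pow_succ]
    have : tD ν₀ (tDm μ a) * b = tD ν₀ (tDm μ a * b) - tDm μ a * tD ν₀ b := by
      rw [hmul]; ring
    rw [this, hk, smul_eq_C_mul, smul_eq_C_mul, map_mul, map_neg, map_one]
    ring

/-- weight of a jet variable: 1 for field variables, 0 for x-variables -/
def wt : JetVar ι n → ℕ := fun v => match v with
  | Sum.inl _ => 1
  | Sum.inr _ => 0

/-- weighted (field) degree of a monomial exponent -/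
def wdeg (s : JetVar ι n →₀ ℕ) : ℕ := s.sum fun v e => wt v * e

lemma wdeg_def (s : JetVar ι n →₀ ℕ) : wdeg s = ∑ v ∈ s.support, wt v * s v := rfl

lemma wdeg_single (v : JetVar ι n) (k : ℕ) : wdeg (Finsupp.single v k) = wt v * k :=
  Finsupp.sum_single_index (by simp)

lemma wdeg_add (s t : JetVar ι n →₀ ℕ) : wdeg (s + t) = wdeg s + wdeg t :=
  Finsupp.sum_add_index (by simp) (by intros; simp [mul_add])

lemma sub_single_add {s : JetVar ι n →₀ ℕ} {v : JetVar ι n} (h : s v ≠ 0) :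
    s - Finsupp.single v 1 + Finsupp.single v 1 = s := by
  ext u
  simp only [Finsupp.add_apply, Finsupp.tsub_apply, Finsupp.single_apply]
  split
  · next heq => subst heq; omega
  · omega

lemma wdeg_sub_single {s : JetVar ι n →₀ ℕ} {v : JetVar ι n} (h : s v ≠ 0) :
    wdeg (s - Finsupp.single v 1) + wt v = wdeg s := by
  conv_rhs => rw [← sub_single_add h]
  rw [wdeg_add, wdeg_single, mul_one]

/-- the homotopy integral operator -/
noncomputable def Ih (f : LocalFn ι n) : LocalFn ι n :=
  ∑ s ∈ f.support, ((wdeg s : ℝ)⁻¹) • monomial s (coeff s f)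

lemma coeff_Ih (t : JetVar ι n →₀ ℕ) (f : LocalFn ι n) :
    coeff t (Ih f) = (wdeg t : ℝ)⁻¹ * coeff t f := by
  unfold Ih
  rw [coeff_sum]
  simp only [coeff_smul, coeff_monomial, smul_eq_mul, mul_ite, mul_zero]
  rw [Finset.sum_ite_eq' f.support t (fun s => (wdeg s : ℝ)⁻¹ * coeff s f)]
  split
  · rfl
  · next ht => rw [notMem_support_iff.mp ht, mul_zero]

lemma Ih_add (a b : LocalFn ι n) : Ih (a + b) = Ih a + Ih b := by
  apply MvPolynomial.ext
  intro m
  simp [coeff_Ih, coeff_add, mul_add]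

lemma Ih_sum {α : Type*} (s : Finset α) (h : α → LocalFn ι n) :
    Ih (∑ x ∈ s, h x) = ∑ x ∈ s, Ih (h x) := by
  apply MvPolynomial.ext
  intro m
  simp [coeff_Ih, coeff_sum, Finset.mul_sum]

lemma Ih_monomial (s : JetVar ι n →₀ ℕ) (c : ℝ) :
    Ih (monomial s c) = (wdeg s : ℝ)⁻¹ • monomial s c := by
  apply MvPolynomial.ext
  intro m
  rw [coeff_Ih, coeff_smul, coeff_monomial, smul_ite, smul_zero, mul_ite, mul_zero]
  split
  · next h => subst h; rw [smul_eq_mul]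
  · rfl

lemma Ih_homog {d : ℕ} {h : LocalFn ι n} (hh : ∀ t ∈ h.support, wdeg t = d) :
    Ih h = (d : ℝ)⁻¹ • h := by
  apply MvPolynomial.ext
  intro m
  rw [coeff_Ih, coeff_smul, smul_eq_mul]
  by_cases hm : m ∈ h.support
  · rw [hh m hm]
  · rw [notMem_support_iff.mp hm, mul_zero, mul_zero]

lemma mem_support_finset_sum {α : Type*} {F : Finset α} {g : α → LocalFn ι n}
    {u : JetVar ι n →₀ ℕ} (hu : u ∈ (∑ x ∈ F, g x).support) : ∃ x ∈ F, u ∈ (g x).support := by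
  classical
  revert hu
  refine Finset.induction_on F ?_ ?_
  · intro hu; simp at hu
  · intro a F' hx ih hu
    rw [Finset.sum_insert hx] at hu
    rcases Finset.mem_union.mp (MvPolynomial.support_add hu) with h | h
    · exact ⟨_, Finset.mem_insert_self _ _, h⟩
    · obtain ⟨x, hxF, hxu⟩ := ih h
      exact ⟨x, Finset.mem_insert_of_mem hxF, hxu⟩

lemma tD_monomial_homog (ν : Fin n) (s : JetVar ι n →₀ ℕ) (c : ℝ) :
    ∀ t ∈ (tD ν (monomial s c)).support, wdeg t = wdeg s := by
  by_cases hc : c = 0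
  · subst hc
    rw [(monomial s).map_zero, tD_zero]
    simp
  rw [tD_eq_sum ν _ (le_of_eq (vars_monomial hc))]
  intro t ht
  -- show every summand is wdeg-homogeneous of degree wdeg s, then use support_add
  have key : ∀ (g₁ g₂ : LocalFn ι n),
      (∀ u ∈ g₁.support, wdeg u = wdeg s) → (∀ u ∈ g₂.support, wdeg u = wdeg s) →
      ∀ u ∈ (g₁ + g₂).support, wdeg u = wdeg s := by
    intro g₁ g₂ h₁ h₂ u hu
    rcases Finset.mem_union.mp (MvPolynomial.support_add hu) with h | h
    · exact h₁ u h
    · exact h₂ u h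
  refine key _ _ ?_ ?_ t ht
  · -- pderiv (inr ν) part
    intro u hu
    rw [pderiv_monomial] at hu
    by_cases hz : s (Sum.inr ν) = 0
    · rw [hz] at hu; simp at hu
    · have := support_monomial_subset hu
      rw [Finset.mem_singleton] at this
      subst this
      have := wdeg_sub_single (v := Sum.inr ν) (s := s) hz
      simpa [wt] using this
  · -- the sum over s.support
    intro u hu
    obtain ⟨x, -, hx⟩ := mem_support_finset_sum hu
    rcases x with ⟨i, μ⟩ | ρ
    · replace hx : u ∈ (X (Sum.inl (i, ν ::ₘ μ)) * pderiv (Sum.inl (i, μ)) (monomial s c) : LocalFn ι n).support := hx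
      rw [pderiv_monomial] at hx
      by_cases hz : s (Sum.inl (i, μ)) = 0
      · rw [hz] at hx; simp at hx
      · rw [X, monomial_mul] at hx
        have hsing := support_monomial_subset hx
        rw [Finset.mem_singleton] at hsing
        subst hsing
        rw [wdeg_add, wdeg_single]
        have := wdeg_sub_single (v := Sum.inl (i, μ)) (s := s) hz
        simp only [wt] at this ⊢
        omega
    · replace hx : u ∈ (0 : LocalFn ι n).support := hx
      simp at hx

lemma Ih_tD (ν : Fin n) (g : LocalFn ι n) : Ih (tD ν g) = tD ν (Ih g) := by
  conv_lhs => rw [← support_sum_monomial_coeff g]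
  conv_rhs => rw [← support_sum_monomial_coeff g]
  rw [tD_sum, Ih_sum, Ih_sum, tD_sum]
  refine Finset.sum_congr rfl fun s _ => ?_
  rw [Ih_monomial, tD_smul, Ih_homog (tD_monomial_homog ν s _)]

/-- the Euler (counting) operator -/
noncomputable def Nf (f : LocalFn ι n) : LocalFn ι n :=
  ∑ v ∈ f.vars,
    (match v with
    | Sum.inl (i, μ) => X (Sum.inl (i, μ)) * pderiv (Sum.inl (i, μ)) f
    | Sum.inr _ => 0 : LocalFn ι n)

lemma Nf_eq (f : LocalFn ι n) :
    Nf f = ∑ s ∈ f.support, monomial s ((wdeg s : ℝ) * coeff s f) := by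
  unfold Nf
  have hterm : ∀ v ∈ f.vars,
      (match v with
      | Sum.inl (i, μ) => X (Sum.inl (i, μ)) * pderiv (Sum.inl (i, μ)) f
      | Sum.inr _ => 0 : LocalFn ι n) =
      ∑ s ∈ f.support,
        (match v with
        | Sum.inl (i, μ) => X (Sum.inl (i, μ)) * pderiv (Sum.inl (i, μ)) (monomial s (coeff s f))
        | Sum.inr _ => 0 : LocalFn ι n) := by
    intro v _
    rcases v with ⟨i, μ⟩ | ρ
    · show X (Sum.inl (i, μ)) * pderiv (Sum.inl (i, μ)) f = _
      conv_lhs => rw [← support_sum_monomial_coeff f]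
      rw [map_sum, Finset.mul_sum]
    · simp
  rw [Finset.sum_congr rfl hterm, Finset.sum_comm]
  refine Finset.sum_congr rfl fun s hs => ?_
  have hsub : s.support ⊆ f.vars := fun v hv => (mem_vars v).mpr ⟨s, hs, hv⟩
  have hzero : ∀ v ∈ f.vars, v ∉ s.support →
      (match v with
      | Sum.inl (i, μ) => X (Sum.inl (i, μ)) * pderiv (Sum.inl (i, μ)) (monomial s (coeff s f))
      | Sum.inr _ => 0 : LocalFn ι n) = 0 := by
    intro v _ hv
    rcases v with ⟨i, μ⟩ | ρ
    · show X (Sum.inl (i, μ)) * pderiv (Sum.inl (i, μ)) (monomial s (coeff s f)) = 0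
      rw [pderiv_monomial, Finsupp.notMem_support_iff.mp hv]
      simp
    · rfl
  rw [← Finset.sum_subset hsub hzero]
  have hper : ∀ v ∈ s.support,
      (match v with
      | Sum.inl (i, μ) => X (Sum.inl (i, μ)) * pderiv (Sum.inl (i, μ)) (monomial s (coeff s f))
      | Sum.inr _ => 0 : LocalFn ι n) =
      monomial s (((wt v * s v : ℕ) : ℝ) * coeff s f) := by
    intro v hv
    rcases v with ⟨i, μ⟩ | ρ
    · show X (Sum.inl (i, μ)) * pderiv (Sum.inl (i, μ)) (monomial s (coeff s f)) = _
      rw [pderiv_monomial, X, monomial_mul, one_mul]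
      have hz : s (Sum.inl (i, μ)) ≠ 0 := Finsupp.mem_support_iff.mp hv
      rw [add_comm, sub_single_add hz]
      congr 1
      show coeff s f * ((s (Sum.inl (i, μ)) : ℕ) : ℝ) = _
      simp only [wt, one_mul]
      ring
    · show (0 : LocalFn ι n) = _
      simp only [wt, zero_mul, Nat.cast_zero, zero_mul, map_zero]
  rw [Finset.sum_congr rfl hper, ← map_sum, ← Finset.sum_mul, ← Nat.cast_sum, ← wdeg_def]

lemma coeff_Nf (t : JetVar ι n →₀ ℕ) (f : LocalFn ι n) :
    coeff t (Nf f) = (wdeg t : ℝ) * coeff t f := by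
  rw [Nf_eq, coeff_sum]
  simp only [coeff_monomial]
  rw [Finset.sum_ite_eq' f.support t (fun s => (wdeg s : ℝ) * coeff s f)]
  split
  · rfl
  · next ht => rw [notMem_support_iff.mp ht, mul_zero]

lemma Ih_Nf (f : LocalFn ι n) (h0' : ∀ s, wdeg s = 0 → coeff s f = 0) : Ih (Nf f) = f := by
  apply MvPolynomial.ext
  intro t
  rw [coeff_Ih, coeff_Nf]
  by_cases ht : wdeg t = 0
  · rw [h0' t ht, mul_zero, mul_zero]
  · rw [inv_mul_cancel_left₀ (by exact_mod_cast ht)]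

lemma wt_eq_zero {v : JetVar ι n} (h : wt v = 0) : ∃ ρ, v = Sum.inr ρ := by
  rcases v with ⟨i, μ⟩ | ρ
  · simp [wt] at h
  · exact ⟨ρ, rfl⟩

lemma coeff_zero_of_zeroSection {f : LocalFn ι n} (h0 : zeroSection f = 0)
    {s : JetVar ι n →₀ ℕ} (hs : wdeg s = 0) : coeff s f = 0 := by
  have key : coeff s (zeroSection f) = coeff s f := by
    unfold zeroSection
    conv_lhs => rw [← support_sum_monomial_coeff f]
    rw [map_sum, coeff_sum]
    have hper : ∀ s' ∈ f.support,
        coeff s ((aeval (fun v : JetVar ι n =>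
          match v with
          | Sum.inl _ => 0
          | Sum.inr ν => X (Sum.inr ν)) : LocalFn ι n →ₐ[ℝ] LocalFn ι n) (monomial s' (coeff s' f)))
        = if s' = s then coeff s' f else 0 := by
      intro s' _
      rw [aeval_monomial]
      by_cases hw : wdeg s' = 0
      · have hprod : (s'.prod fun v e => (match v with
            | Sum.inl _ => (0 : LocalFn ι n)
            | Sum.inr ν => X (Sum.inr ν)) ^ e) = s'.prod fun v e => (X v : LocalFn ι n) ^ e := by
          apply Finsupp.prod_congr
          intro v hv
          have hwt : wt v = 0 := by
            rw [wdeg_def] at hw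
            have := Finset.sum_eq_zero_iff.mp hw v hv
            have hsv : s' v ≠ 0 := Finsupp.mem_support_iff.mp hv
            rcases Nat.mul_eq_zero.mp this with h | h
            · exact h
            · exact absurd h hsv
          obtain ⟨ρ, rfl⟩ := wt_eq_zero hwt
          rfl
        rw [hprod, algebraMap_eq, ← monomial_eq, coeff_monomial]
      · have hex : ∃ v ∈ s'.support, wt v * s' v ≠ 0 := by
          by_contra hcon
          push_neg at hcon
          exact hw (Finset.sum_eq_zero fun v hv => hcon v hv)
        obtain ⟨v, hv, hvne⟩ := hex
        have hwt : wt v ≠ 0 := fun h => hvne (by rw [h, zero_mul])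
        have hsv : s' v ≠ 0 := fun h => hvne (by rw [h, mul_zero])
        obtain ⟨i, μ⟩ | ρ := v
        · have hprod : (s'.prod fun v e => (match v with
              | Sum.inl _ => (0 : LocalFn ι n)
              | Sum.inr ν => X (Sum.inr ν)) ^ e) = 0 := by
            apply Finset.prod_eq_zero hv
            show (0 : LocalFn ι n) ^ s' (Sum.inl (i, μ)) = 0
            exact zero_pow hsv
          rw [hprod, mul_zero, coeff_zero]
          have : s' ≠ s := fun h => hw (h ▸ hs)
          rw [if_neg this]
        · exact absurd rfl hwt
    rw [Finset.sum_congr rfl hper, Finset.sum_ite_eq' f.support s (fun s' => coeff s' f)]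
    split
    · rfl
    · next ht => rw [notMem_support_iff.mp ht]
  rw [h0, coeff_zero] at key
  exact key.symm

end Aux

/-- a local function with no field-independent part and vanishing
Euler-Lagrange derivatives is a total divergence. -/
theorem total_divergence_of_el_zero {ι : Type} {n : ℕ} [DecidableEq ι]
    (f : LocalFn ι n) (h0 : zeroSection f = 0)
    (hEL : ∀ i : ι, EL i f = 0) :
    ∃ j : Fin n → LocalFn ι n, f = ∑ ν : Fin n, tD ν (j ν) := by
  classical
  have hv : ∀ v : JetVar ι n, ∃ k : Fin n → LocalFn ι n,
      (match v with
      | Sum.inl (i, μ) => X (Sum.inl (i, μ)) * pderiv (Sum.inl (i, μ)) f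
      | Sum.inr _ => 0 : LocalFn ι n)
      = (match v with
      | Sum.inl (i, μ) => ((-1 : ℝ) ^ Multiset.card μ) •
          (X (Sum.inl (i, (0 : Multiset (Fin n)))) * tDm μ (pderiv (Sum.inl (i, μ)) f))
      | Sum.inr _ => 0 : LocalFn ι n) + ∑ ν : Fin n, tD ν (k ν) := by
    intro v
    rcases v with ⟨i, μ⟩ | ρ
    · obtain ⟨k, hk⟩ := ibp μ (X (Sum.inl (i, (0 : Multiset (Fin n))))) (pderiv (Sum.inl (i, μ)) f)
      refine ⟨k, ?_⟩
      have h1 : tDm μ (X (Sum.inl (i, (0 : Multiset (Fin n)))) : LocalFn ι n)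
          = X (Sum.inl (i, μ)) := by rw [tDm_X, add_zero]
      show X (Sum.inl (i, μ)) * pderiv (Sum.inl (i, μ)) f = _
      rw [← h1]
      exact hk
    · exact ⟨0, by simp [tD_zero]⟩
  choose K hK using hv
  have hNf : Nf f = (∑ v ∈ f.vars,
      (match v with
      | Sum.inl (i, μ) => ((-1 : ℝ) ^ Multiset.card μ) •
          (X (Sum.inl (i, (0 : Multiset (Fin n)))) * tDm μ (pderiv (Sum.inl (i, μ)) f))
      | Sum.inr _ => 0 : LocalFn ι n))
      + ∑ ν : Fin n, tD ν (∑ v ∈ f.vars, K v ν) := by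
    unfold Nf
    rw [Finset.sum_congr rfl (fun v _ => hK v), Finset.sum_add_distrib]
    congr 1
    rw [Finset.sum_comm]
    exact Finset.sum_congr rfl fun ν _ => (tD_sum ν _ _).symm
  set T : Finset ι := f.vars.biUnion (fun v => match v with
    | Sum.inl (i, _) => {i}
    | Sum.inr _ => (∅ : Finset ι)) with hT
  have hELpart : (∑ v ∈ f.vars,
      (match v with
      | Sum.inl (i, μ) => ((-1 : ℝ) ^ Multiset.card μ) •
          (X (Sum.inl (i, (0 : Multiset (Fin n)))) * tDm μ (pderiv (Sum.inl (i, μ)) f))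
      | Sum.inr _ => 0 : LocalFn ι n))
      = ∑ i ∈ T, X (Sum.inl (i, (0 : Multiset (Fin n)))) * EL i f := by
    have hmul : ∀ i ∈ T, X (Sum.inl (i, (0 : Multiset (Fin n)))) * EL i f
        = ∑ v ∈ f.vars, X (Sum.inl (i, (0 : Multiset (Fin n)))) *
          (match v with
          | Sum.inl (j, μ) =>
              if j = i then ((-1 : ℝ) ^ Multiset.card μ) • tDm μ (pderiv (Sum.inl (j, μ)) f)
              else 0
          | Sum.inr _ => 0 : LocalFn ι n) := by
      intro i _
      unfold EL
      rw [Finset.mul_sum]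
    rw [Finset.sum_congr rfl hmul, Finset.sum_comm]
    refine Finset.sum_congr rfl fun v hv => ?_
    rcases v with ⟨j, μ⟩ | ρ
    · have hjT : j ∈ T := by
        rw [hT]
        refine Finset.mem_biUnion.mpr ⟨Sum.inl (j, μ), hv, ?_⟩
        exact Finset.mem_singleton_self j
      show ((-1 : ℝ) ^ Multiset.card μ) •
          (X (Sum.inl (j, (0 : Multiset (Fin n)))) * tDm μ (pderiv (Sum.inl (j, μ)) f))
        = ∑ i ∈ T, X (Sum.inl (i, (0 : Multiset (Fin n)))) *
            (if j = i then ((-1 : ℝ) ^ Multiset.card μ) • tDm μ (pderiv (Sum.inl (j, μ)) f)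
             else 0)
      have : ∀ i ∈ T, X (Sum.inl (i, (0 : Multiset (Fin n)))) *
            (if j = i then ((-1 : ℝ) ^ Multiset.card μ) • tDm μ (pderiv (Sum.inl (j, μ)) f)
             else 0)
          = if j = i then X (Sum.inl (i, (0 : Multiset (Fin n)))) *
              (((-1 : ℝ) ^ Multiset.card μ) • tDm μ (pderiv (Sum.inl (j, μ)) f)) else 0 := by
        intro i _
        rw [mul_ite, mul_zero]
      rw [Finset.sum_congr rfl this,
        Finset.sum_ite_eq T j (fun i => X (Sum.inl (i, (0 : Multiset (Fin n)))) *
          (((-1 : ℝ) ^ Multiset.card μ) • tDm μ (pderiv (Sum.inl (j, μ)) f))),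
        if_pos hjT, mul_smul_comm]
    · show (0 : LocalFn ι n) = ∑ i ∈ T, X (Sum.inl (i, (0 : Multiset (Fin n)))) * (0 : LocalFn ι n)
      simp
  have hNf2 : Nf f = ∑ ν : Fin n, tD ν (∑ v ∈ f.vars, K v ν) := by
    rw [hNf, hELpart]
    simp [hEL]
  refine ⟨fun ν => Ih (∑ v ∈ f.vars, K v ν), ?_⟩
  calc f = Ih (Nf f) := (Ih_Nf f fun s hs => coeff_zero_of_zeroSection h0 hs).symm
    _ = Ih (∑ ν : Fin n, tD ν (∑ v ∈ f.vars, K v ν)) := by rw [hNf2]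
    _ = ∑ ν : Fin n, Ih (tD ν (∑ v ∈ f.vars, K v ν)) := Ih_sum _ _
    _ = ∑ ν : Fin n, tD ν (Ih (∑ v ∈ f.vars, K v ν)) := Finset.sum_congr rfl fun ν _ => Ih_tD ν _
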